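/- Let N ≥ 1, let u₀, u₁, …, u_N ∈ ℝ² be states, let T, Λ ∈ ℝ with Λ ≥ 0, let x₁ < x₂ < … < x_N be reals, and let σ₁, …, σ_N be speeds with |σᵢ| ≤ Λ for every i. For τ ∈ ℝ define the fronts sᵢ(τ) := xᵢ + σᵢ·(τ − T), and for every τ such that s₁(τ) < s₂(τ) < … < s_N(τ), define the piecewise constant profile u(τ, x) := u₀ for x < s₁(τ), u(τ, x) := uᵢ for sᵢ(τ) ≤ x < s_{i+1}(τ) (1 ≤ i ≤ N−1), and u(τ, x) := u_N for x ≥ s_N(τ). Then for all times s ≤ t such that the fronts remain strictly ordered at every τ ∈ [s, t], one has ∫_ℝ ‖u(t, x) − u(s, x)‖ dx ≤ Λ · (∑_{i=1}^{N} ‖uᵢ − u_{i−1}‖) · (t − s), where ‖(a, b)‖ := |a| + |b|. -/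

import Mathlib

open MeasureTheory

open Classical in
/-- Telescoping representation of the piecewise-constant profile. -/
lemma wavefront_profile_eq (N : ℕ) (hN1 : 1 ≤ N) (u : ℕ → ℝ × ℝ) (sτ : ℕ → ℝ)
    (hord : ∀ i, 1 ≤ i → i < N → sτ i < sτ (i + 1)) (y : ℝ) (Uy : ℝ × ℝ)
    (h0 : y < sτ 1 → Uy = u 0)
    (hmid : ∀ i, 1 ≤ i → i < N → sτ i ≤ y → y < sτ (i + 1) → Uy = u i)
    (hNc : sτ N ≤ y → Uy = u N) :
    Uy = u 0 + ∑ i ∈ Finset.Icc 1 N, (if sτ i ≤ y then u i - u (i - 1) else 0) := by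
  have mono : ∀ i j, 1 ≤ i → i ≤ j → j ≤ N → sτ i ≤ sτ j := by
    intro i j h1 hij hjN
    induction j, hij using Nat.le_induction with
    | base => exact le_rfl
    | succ n hn ih =>
      have hnN : n ≤ N := le_trans (Nat.le_succ n) hjN
      have := hord n (le_trans h1 hn) (Nat.lt_of_succ_le hjN)
      exact le_trans (ih hnN) this.le
  set P : ℕ → Prop := fun i => 1 ≤ i ∧ sτ i ≤ y with hP
  set k := Nat.findGreatest P N with hk
  have hkN : k ≤ N := Nat.findGreatest_le N
  have hiff : ∀ i, 1 ≤ i → i ≤ N → (sτ i ≤ y ↔ i ≤ k) := by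
    intro i h1 hiN
    constructor
    · intro h; exact Nat.le_findGreatest hiN ⟨h1, h⟩
    · intro hik
      have hk1 : 1 ≤ k := le_trans h1 hik
      have hPk : P k := by
        have hkne : k ≠ 0 := by omega
        by_contra hc
        have hz : k = 0 := by
          rw [hk, Nat.findGreatest_eq_zero_iff]
          intro m h0m hmN hPm
          exact hc (hk ▸ Nat.findGreatest_spec hmN hPm)
        exact hkne hz
      exact le_trans (mono i k h1 hik hkN) hPk.2
  -- identify U with u k
  have hUk : Uy = u k := by
    rcases Nat.eq_zero_or_pos k with hk0 | hkpos
    · have : y < sτ 1 := by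
        by_contra hc
        push_neg at hc
        have := (hiff 1 le_rfl hN1).1 hc
        omega
      rw [hk0]; exact h0 this
    · rcases eq_or_lt_of_le hkN with hkN' | hkN'
      · rw [hkN']; exact hNc ((hiff N hN1 le_rfl).2 hkN'.ge)
      · have h1 : sτ k ≤ y := (hiff k hkpos hkN).2 le_rfl
        have h2 : y < sτ (k + 1) := by
          by_contra hc
          push_neg at hc
          have := (hiff (k + 1) (by omega) hkN').1 hc
          omega
        exact hmid k hkpos hkN' h1 h2
  -- the sum telescopes
  have hfilter : (Finset.Icc 1 N).filter (fun i => sτ i ≤ y) = Finset.Icc 1 k := by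
    ext i
    simp only [Finset.mem_filter, Finset.mem_Icc]
    constructor
    · rintro ⟨⟨h1, h2⟩, h3⟩; exact ⟨h1, (hiff i h1 h2).1 h3⟩
    · rintro ⟨h1, h2⟩; exact ⟨⟨h1, le_trans h2 hkN⟩, (hiff i h1 (le_trans h2 hkN)).2 h2⟩
  have htel : ∀ m : ℕ, (∑ i ∈ Finset.Icc 1 m, (u i - u (i - 1))) = u m - u 0 := by
    intro m
    induction m with
    | zero => simp
    | succ n ih =>
      rw [Finset.sum_Icc_succ_top (by omega : 1 ≤ n + 1), ih]
      simp
  rw [hUk, ← Finset.sum_filter, hfilter, htel k]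
  abel

/-- L¹-Lipschitz-in-time estimate for a piecewise constant wave-front
tracking profile: if the `N` fronts `sᵢ(τ) = xᵢ + σᵢ(τ − T)` have speeds bounded by `Λ`
and remain strictly ordered on `[s, t]`, then
`∫ ‖u(t,·) − u(s,·)‖ ≤ Λ · (∑ᵢ ‖uᵢ − uᵢ₋₁‖) · (t − s)`, where `‖(a,b)‖ = |a| + |b|`. -/
theorem wavefront_L1_lipschitz
    (N : ℕ) (hN : 1 ≤ N) (u : ℕ → ℝ × ℝ) (T Λ : ℝ) (hΛ : 0 ≤ Λ)
    (x σ : ℕ → ℝ)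
    (hx : ∀ i, 1 ≤ i → i < N → x i < x (i + 1))
    (hσ : ∀ i, 1 ≤ i → i ≤ N → |σ i| ≤ Λ)
    (s : ℕ → ℝ → ℝ) (hs : ∀ i τ, s i τ = x i + σ i * (τ - T))
    (U : ℝ → ℝ → ℝ × ℝ)
    (hU : ∀ τ : ℝ, (∀ i, 1 ≤ i → i < N → s i τ < s (i + 1) τ) →
      ∀ y : ℝ,
        (y < s 1 τ → U τ y = u 0) ∧
        (∀ i, 1 ≤ i → i < N → s i τ ≤ y → y < s (i + 1) τ → U τ y = u i) ∧
        (s N τ ≤ y → U τ y = u N)) :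
    ∀ t₁ t₂ : ℝ, t₁ ≤ t₂ →
      (∀ τ ∈ Set.Icc t₁ t₂, ∀ i, 1 ≤ i → i < N → s i τ < s (i + 1) τ) →
      (∫ y : ℝ, (|(U t₂ y).1 - (U t₁ y).1| + |(U t₂ y).2 - (U t₁ y).2|)) ≤
        Λ * (∑ i ∈ Finset.Icc 1 N,
              (|(u i).1 - (u (i - 1)).1| + |(u i).2 - (u (i - 1)).2|)) * (t₂ - t₁) := by
  classical
  intro t₁ t₂ ht hord
  have hord1 : ∀ i, 1 ≤ i → i < N → s i t₁ < s (i + 1) t₁ :=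
    hord t₁ ⟨le_rfl, ht⟩
  have hord2 : ∀ i, 1 ≤ i → i < N → s i t₂ < s (i + 1) t₂ :=
    hord t₂ ⟨ht, le_rfl⟩
  -- profile representation at both times
  have hrep : ∀ τ, (∀ i, 1 ≤ i → i < N → s i τ < s (i + 1) τ) → ∀ y : ℝ,
      U τ y = u 0 + ∑ i ∈ Finset.Icc 1 N, (if s i τ ≤ y then u i - u (i - 1) else 0) := by
    intro τ hτ y
    obtain ⟨h0, hmid, hNc⟩ := hU τ hτ y
    exact wavefront_profile_eq N hN u (fun i => s i τ) hτ y (U τ y) h0 hmid hNc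
  -- difference function
  set D : ℕ → ℝ → ℝ × ℝ := fun i y =>
    (if s i t₂ ≤ y then u i - u (i - 1) else 0) - (if s i t₁ ≤ y then u i - u (i - 1) else 0)
    with hD
  have hdiff : ∀ y, U t₂ y - U t₁ y = ∑ i ∈ Finset.Icc 1 N, D i y := by
    intro y
    rw [hrep t₂ hord2 y, hrep t₁ hord1 y]
    simp only [hD]
    rw [Finset.sum_sub_distrib]
    abel
  -- weights
  set c : ℕ → ℝ := fun i => |(u i).1 - (u (i - 1)).1| + |(u i).2 - (u (i - 1)).2| with hc
  have hc0 : ∀ i, 0 ≤ c i := fun i => add_nonneg (abs_nonneg _) (abs_nonneg _)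
  -- interval bounds
  set a : ℕ → ℝ := fun i => min (s i t₁) (s i t₂) with ha
  set b : ℕ → ℝ := fun i => max (s i t₁) (s i t₂) with hb
  set g : ℕ → ℝ → ℝ := fun i y => (Set.Ico (a i) (b i)).indicator (fun _ => c i) y with hg
  have hDg : ∀ i y, |(D i y).1| + |(D i y).2| = g i y := by
    intro i y
    rw [hg]
    simp only [Set.indicator_apply, Set.mem_Ico]
    by_cases h1 : s i t₁ ≤ y <;> by_cases h2 : s i t₂ ≤ y
    · have hno : ¬ (a i ≤ y ∧ y < b i) := fun h => absurd h.2 (not_lt.2 (sup_le h1 h2))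
      rw [if_neg hno, hD]
      simp [if_pos h1, if_pos h2]
    · have key : a i ≤ y ∧ y < b i :=
        ⟨le_trans (min_le_left _ _) h1, lt_of_lt_of_le (not_le.1 h2) (le_max_right _ _)⟩
      rw [if_pos key, hD]
      simp only [if_neg h2, if_pos h1, zero_sub]
      show |(-(u i - u (i-1))).1| + |(-(u i - u (i-1))).2| = c i
      simp [hc, abs_sub_comm]
    · have key : a i ≤ y ∧ y < b i :=
        ⟨le_trans (min_le_right _ _) h2, lt_of_lt_of_le (not_le.1 h1) (le_max_left _ _)⟩
      rw [if_pos key, hD]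
      simp only [if_pos h2, if_neg h1, sub_zero]
      show |(u i - u (i-1)).1| + |(u i - u (i-1)).2| = c i
      simp [hc]
    · have hno : ¬ (a i ≤ y ∧ y < b i) :=
        fun h => absurd h.1 (not_le.2 (lt_min (not_le.1 h1) (not_le.1 h2)))
      rw [if_neg hno, hD]
      simp [if_neg h1, if_neg h2]
  -- the dominating function
  set G : ℝ → ℝ := fun y => ∑ i ∈ Finset.Icc 1 N, g i y with hG
  have hgint : ∀ i, Integrable (g i) := by
    intro i
    rw [hg]
    simp only []
    rw [integrable_indicator_iff measurableSet_Ico]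
    exact integrableOn_const measure_Ico_lt_top.ne
  have hGint : Integrable G := integrable_finset_sum _ (fun i _ => hgint i)
  -- pointwise bound
  have hfg : ∀ y, |(U t₂ y).1 - (U t₁ y).1| + |(U t₂ y).2 - (U t₁ y).2| ≤ G y := by
    intro y
    have h1 : (U t₂ y).1 - (U t₁ y).1 = ∑ i ∈ Finset.Icc 1 N, (D i y).1 := by
      rw [← Prod.fst_sum, ← hdiff y]; rfl
    have h2 : (U t₂ y).2 - (U t₁ y).2 = ∑ i ∈ Finset.Icc 1 N, (D i y).2 := by
      rw [← Prod.snd_sum, ← hdiff y]; rfl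
    rw [h1, h2, hG]
    calc |∑ i ∈ Finset.Icc 1 N, (D i y).1| + |∑ i ∈ Finset.Icc 1 N, (D i y).2|
        ≤ (∑ i ∈ Finset.Icc 1 N, |(D i y).1|) + ∑ i ∈ Finset.Icc 1 N, |(D i y).2| := by
          gcongr <;> exact Finset.abs_sum_le_sum_abs _ _
      _ = ∑ i ∈ Finset.Icc 1 N, (|(D i y).1| + |(D i y).2|) := by
          rw [Finset.sum_add_distrib]
      _ = ∑ i ∈ Finset.Icc 1 N, g i y := by
          exact Finset.sum_congr rfl (fun i _ => hDg i y)
  -- integrate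
  have hint : (∫ y : ℝ, (|(U t₂ y).1 - (U t₁ y).1| + |(U t₂ y).2 - (U t₁ y).2|)) ≤ ∫ y, G y := by
    apply integral_mono_of_nonneg
    · exact Filter.Eventually.of_forall (fun y => add_nonneg (abs_nonneg _) (abs_nonneg _))
    · exact hGint
    · exact Filter.Eventually.of_forall hfg
  refine le_trans hint ?_
  rw [hG, integral_finset_sum _ (fun i _ => hgint i)]
  have hgival : ∀ i, 1 ≤ i → i ≤ N → (∫ y, g i y) ≤ Λ * (t₂ - t₁) * c i := by
    intro i h1 hiN
    rw [hg]
    simp only []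
    rw [integral_indicator_const _ measurableSet_Ico, measureReal_def, Real.volume_Ico, smul_eq_mul]
    have hdiffst : s i t₂ - s i t₁ = σ i * (t₂ - t₁) := by rw [hs, hs]; ring
    have hab : b i - a i = |σ i| * (t₂ - t₁) := by
      rw [hb, ha]
      simp only []
      rw [max_sub_min_eq_abs, hdiffst, abs_mul,
        abs_of_nonneg (sub_nonneg.2 ht)]
    rw [ENNReal.toReal_ofReal (by rw [hab]; exact mul_nonneg (abs_nonneg _) (sub_nonneg.2 ht)),
      hab]
    exact mul_le_mul_of_nonneg_right
      (mul_le_mul_of_nonneg_right (hσ i h1 hiN) (sub_nonneg.2 ht)) (hc0 i)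
  calc ∑ i ∈ Finset.Icc 1 N, ∫ y, g i y
      ≤ ∑ i ∈ Finset.Icc 1 N, Λ * (t₂ - t₁) * c i := by
        apply Finset.sum_le_sum
        intro i hi
        rw [Finset.mem_Icc] at hi
        exact hgival i hi.1 hi.2
    _ = Λ * (∑ i ∈ Finset.Icc 1 N, c i) * (t₂ - t₁) := by
        rw [Finset.mul_sum, Finset.sum_mul]
        exact Finset.sum_congr rfl (fun i _ => by ring)
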